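/- Fix n ≥ 2 and let N = n(n−1)/2 + 1. Suppose that for all real symmetric n×n matrices A₁, …, A_N one has (Σ_{r=1}^N ‖A_r‖²)² ≥ 2 Σ_{1≤r<s≤N} ‖[A_r,A_s]‖² (the DDVV inequality P(n,N)). Then for every m ≥ 1 and all real symmetric n×n matrices A₁, …, A_m one has (Σ_{r=1}^m ‖A_r‖²)² ≥ 2 Σ_{1≤r<s≤m} ‖[A_r,A_s]‖² (the DDVV inequality P(n,m)). -/

import Mathlib

open Matrix BigOperators

/-- Frobenius norm squared of a real `n × n` matrix: the sum of the squares of all entries. -/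
noncomputable def frobSq {n : ℕ} (A : Matrix (Fin n) (Fin n) ℝ) : ℝ :=
  ∑ i, ∑ j, (A i j) ^ 2

/-- The commutator `[A, B] = A * B - B * A`. -/
def mcomm {n : ℕ} (A B : Matrix (Fin n) (Fin n) ℝ) : Matrix (Fin n) (Fin n) ℝ :=
  A * B - B * A

namespace DDVVaux

variable {n : ℕ}

/-- Frobenius inner product. -/
noncomputable def inn (A B : Matrix (Fin n) (Fin n) ℝ) : ℝ := ∑ i, ∑ j, A i j * B i j

lemma frobSq_eq_inn (A : Matrix (Fin n) (Fin n) ℝ) : frobSq A = inn A A := by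
  simp [frobSq, inn, sq]

lemma inn_comm (A B : Matrix (Fin n) (Fin n) ℝ) : inn A B = inn B A := by
  simp [inn, mul_comm]

lemma inn_smul_left (c : ℝ) (A B : Matrix (Fin n) (Fin n) ℝ) :
    inn (c • A) B = c * inn A B := by
  simp [inn, Finset.mul_sum, mul_assoc]

lemma inn_smul_right (c : ℝ) (A B : Matrix (Fin n) (Fin n) ℝ) :
    inn A (c • B) = c * inn A B := by
  rw [inn_comm, inn_smul_left, inn_comm]

lemma inn_add_left (A B C : Matrix (Fin n) (Fin n) ℝ) :
    inn (A + B) C = inn A C + inn B C := by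
  simp [inn, add_mul, Finset.sum_add_distrib]

lemma inn_add_right (A B C : Matrix (Fin n) (Fin n) ℝ) :
    inn A (B + C) = inn A B + inn A C := by
  rw [inn_comm, inn_add_left, inn_comm A B, inn_comm A C]

lemma inn_sum_left {ι : Type*} (s : Finset ι) (f : ι → Matrix (Fin n) (Fin n) ℝ)
    (B : Matrix (Fin n) (Fin n) ℝ) :
    inn (∑ t ∈ s, f t) B = ∑ t ∈ s, inn (f t) B := by
  classical
  induction s using Finset.induction with
  | empty => simp [inn]
  | @insert a s h ih => rw [Finset.sum_insert h, inn_add_left, ih, Finset.sum_insert h]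

lemma inn_sum_right {ι : Type*} (s : Finset ι) (f : ι → Matrix (Fin n) (Fin n) ℝ)
    (B : Matrix (Fin n) (Fin n) ℝ) :
    inn B (∑ t ∈ s, f t) = ∑ t ∈ s, inn B (f t) := by
  rw [inn_comm, inn_sum_left]
  simp [inn_comm]

lemma frobSq_neg (A : Matrix (Fin n) (Fin n) ℝ) : frobSq (-A) = frobSq A := by
  simp [frobSq]

lemma frobSq_zero : frobSq (0 : Matrix (Fin n) (Fin n) ℝ) = 0 := by simp [frobSq]

lemma mcomm_self (A : Matrix (Fin n) (Fin n) ℝ) : mcomm A A = 0 := by simp [mcomm]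

lemma mcomm_anti (A B : Matrix (Fin n) (Fin n) ℝ) : mcomm A B = - mcomm B A := by
  simp [mcomm]

lemma mcomm_zero_left (X : Matrix (Fin n) (Fin n) ℝ) : mcomm 0 X = 0 := by simp [mcomm]

lemma mcomm_zero_right (X : Matrix (Fin n) (Fin n) ℝ) : mcomm X 0 = 0 := by simp [mcomm]

lemma mcomm_smul_left (c : ℝ) (A B : Matrix (Fin n) (Fin n) ℝ) :
    mcomm (c • A) B = c • mcomm A B := by
  simp [mcomm, Matrix.smul_mul, Matrix.mul_smul, smul_sub]

lemma mcomm_smul_right (c : ℝ) (A B : Matrix (Fin n) (Fin n) ℝ) :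
    mcomm A (c • B) = c • mcomm A B := by
  simp [mcomm, Matrix.smul_mul, Matrix.mul_smul, smul_sub]

lemma mcomm_add_left (A B C : Matrix (Fin n) (Fin n) ℝ) :
    mcomm (A + B) C = mcomm A C + mcomm B C := by
  simp only [mcomm, add_mul, mul_add]
  abel

lemma mcomm_add_right (A B C : Matrix (Fin n) (Fin n) ℝ) :
    mcomm A (B + C) = mcomm A B + mcomm A C := by
  simp only [mcomm, add_mul, mul_add]
  abel

lemma mcomm_sum_right {ι : Type*} (s : Finset ι) (A : Matrix (Fin n) (Fin n) ℝ)
    (f : ι → Matrix (Fin n) (Fin n) ℝ) :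
    mcomm A (∑ t ∈ s, f t) = ∑ t ∈ s, mcomm A (f t) := by
  classical
  induction s using Finset.induction with
  | empty => simp [mcomm]
  | @insert a s h ih => rw [Finset.sum_insert h, mcomm_add_right, ih, Finset.sum_insert h]

lemma mcomm_sum_left {ι : Type*} (s : Finset ι) (A : Matrix (Fin n) (Fin n) ℝ)
    (f : ι → Matrix (Fin n) (Fin n) ℝ) :
    mcomm (∑ t ∈ s, f t) A = ∑ t ∈ s, mcomm (f t) A := by
  classical
  induction s using Finset.induction with
  | empty => simp [mcomm]
  | @insert a s h ih => rw [Finset.sum_insert h, mcomm_add_left, ih, Finset.sum_insert h]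

lemma frobSq_mcomm_symm (A B : Matrix (Fin n) (Fin n) ℝ) :
    frobSq (mcomm A B) = frobSq (mcomm B A) := by
  rw [mcomm_anti, frobSq_neg]

lemma parseval {k : ℕ} (O : Fin k → Fin k → ℝ)
    (hO : ∀ t t', ∑ s, O s t * O s t' = if t = t' then (1:ℝ) else 0)
    (v : Fin k → Matrix (Fin n) (Fin n) ℝ) :
    ∑ s, inn (∑ t, O s t • v t) (∑ t, O s t • v t) = ∑ t, inn (v t) (v t) := by
  have h1 : ∀ s, inn (∑ t, O s t • v t) (∑ t, O s t • v t)
      = ∑ t, ∑ t', O s t * O s t' * inn (v t) (v t') := by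
    intro s
    rw [inn_sum_left]
    apply Finset.sum_congr rfl
    intro t _
    rw [inn_smul_left, inn_sum_right, Finset.mul_sum]
    apply Finset.sum_congr rfl
    intro t' _
    rw [inn_smul_right]
    ring
  simp only [h1]
  rw [Finset.sum_comm]
  have h2 : ∀ t, (∑ s, ∑ t', O s t * O s t' * inn (v t) (v t'))
      = ∑ t', (∑ s, O s t * O s t') * inn (v t) (v t') := by
    intro t
    rw [Finset.sum_comm]
    apply Finset.sum_congr rfl
    intro t' _
    rw [Finset.sum_mul]
  simp only [h2, hO, ite_mul, one_mul, zero_mul]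
  apply Finset.sum_congr rfl
  intro t _
  simp

lemma double_sum_eq {k : ℕ} (f : Fin k → Fin k → ℝ) (hsymm : ∀ r s, f r s = f s r)
    (hdiag : ∀ r, f r r = 0) :
    ∑ r, ∑ s, f r s = 2 * ∑ r, ∑ s, (if r < s then f r s else 0) := by
  have key : ∀ r s : Fin k, f r s
      = (if r < s then f r s else 0) + (if s < r then f r s else 0) := by
    intro r s
    rcases lt_trichotomy r s with h|h|h
    · simp [h, not_lt_of_gt h]
    · subst h; simp [hdiag]
    · simp [h, not_lt_of_gt h]
  have hT : (∑ r, ∑ s, (if s < r then f r s else 0))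
      = ∑ r, ∑ s, (if r < s then f r s else 0) := by
    rw [Finset.sum_comm]
    apply Finset.sum_congr rfl
    intro r _
    apply Finset.sum_congr rfl
    intro s _
    by_cases h : r < s <;> simp [h, hsymm s r]
  calc ∑ r, ∑ s, f r s
      = ∑ r, ∑ s, ((if r < s then f r s else 0) + (if s < r then f r s else 0)) := by
        simp_rw [← key]
    _ = (∑ r, ∑ s, (if r < s then f r s else 0))
        + ∑ r, ∑ s, (if s < r then f r s else 0) := by
        rw [← Finset.sum_add_distrib]
        apply Finset.sum_congr rfl
        intro r _
        rw [← Finset.sum_add_distrib]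
    _ = 2 * ∑ r, ∑ s, (if r < s then f r s else 0) := by rw [hT]; ring

lemma card_pairs (n : ℕ) : Fintype.card {p : Fin n × Fin n // p.1 < p.2} = n * (n-1) / 2 := by
  have h1 : Fintype.card {p : Fin n × Fin n // p.1 < p.2} = ∑ j : Fin n, (j : ℕ) := by
    rw [Fintype.card_subtype, Finset.card_filter, Fintype.sum_prod_type_right]
    congr 1; funext j
    rw [← Finset.card_filter]
    have : (Finset.univ.filter (fun i => i < j)) = Finset.Iio j := by ext i; simp
    rw [this, Fin.card_Iio]
  have h2 : (∑ j : Fin n, (j:ℕ)) * 2 = n * (n-1) := by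
    rw [Fin.sum_univ_eq_sum_range (fun i => i) n, Finset.sum_range_id_mul_two]
  omega

lemma exists_kernel_vec {k : ℕ} (hk : n * (n-1)/2 < k)
    (v : Fin k → Matrix (Fin n) (Fin n) ℝ)
    (hskew : ∀ s, (v s)ᵀ = - (v s)) :
    ∃ y : Fin k → ℝ, (∑ t, y t • v t = 0) ∧ y ≠ 0 := by
  classical
  set W := {p : Fin n × Fin n // p.1 < p.2}
  let w : Fin k → (W → ℝ) := fun s p => v s p.1.1 p.1.2
  have hnind : ¬ LinearIndependent ℝ w := by
    intro hli
    have := hli.fintype_card_le_finrank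
    rw [Module.finrank_pi, Fintype.card_fin] at this
    rw [card_pairs n] at this
    omega
  rw [Fintype.not_linearIndependent_iff] at hnind
  obtain ⟨g, hg, i, hi⟩ := hnind
  refine ⟨g, ?_, ?_⟩
  · set X := ∑ t, g t • v t with hX
    have hXskew : Xᵀ = -X := by
      rw [hX, Matrix.transpose_sum]
      rw [← Finset.sum_neg_distrib]
      apply Finset.sum_congr rfl
      intro t _
      rw [Matrix.transpose_smul, hskew t, smul_neg]
    have hupper : ∀ i j : Fin n, i < j → X i j = 0 := by
      intro a b hab
      have := congrFun hg ⟨(a, b), hab⟩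
      simp only [Finset.sum_apply, Pi.smul_apply, Pi.zero_apply, smul_eq_mul] at this
      have hXab : X a b = ∑ t, g t * v t a b := by
        simp [hX, Finset.sum_apply, Matrix.sum_apply]
      rw [hXab]
      exact this
    ext a b
    rcases lt_trichotomy a b with h|h|h
    · simp [hupper a b h]
    · subst h
      have := congrFun (congrFun hXskew a) a
      simp only [Matrix.transpose_apply, Matrix.neg_apply] at this
      simp only [Matrix.zero_apply]
      linarith
    · have := congrFun (congrFun hXskew b) a
      simp only [Matrix.transpose_apply, Matrix.neg_apply] at this
      rw [this, hupper b a h]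
      simp
  · intro h0
    rw [h0] at hi
    exact hi rfl

lemma householder {k : ℕ} (j₀ : Fin k) (y : Fin k → ℝ) (hy : ∑ t, y t * y t = 1) :
    ∃ O : Fin k → Fin k → ℝ,
      (∀ t t', ∑ s, O s t * O s t' = if t = t' then (1:ℝ) else 0) ∧ (∀ t, O j₀ t = y t) := by
  classical
  by_cases hc : y j₀ = 1
  · have hrest : ∀ t, t ≠ j₀ → y t = 0 := by
      intro t ht
      have hsplit : ∑ s, y s * y s = y j₀ * y j₀ + ∑ s ∈ Finset.univ.erase j₀, y s * y s :=
        (Finset.add_sum_erase _ _ (Finset.mem_univ j₀)).symm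
      have hz : ∑ s ∈ Finset.univ.erase j₀, y s * y s = 0 := by
        rw [hsplit, hc] at hy; linarith
      have hnn : ∀ s ∈ Finset.univ.erase j₀, 0 ≤ y s * y s := by
        intro s _; exact mul_self_nonneg _
      have := (Finset.sum_eq_zero_iff_of_nonneg hnn).1 hz t (by simp [ht])
      nlinarith [this]
    refine ⟨fun s t => if s = t then 1 else 0, ?_, ?_⟩
    · intro t t'
      simp only [ite_mul, one_mul, zero_mul]
      simp [Finset.sum_ite_eq']
    · intro t
      by_cases ht : t = j₀
      · subst ht; simp [hc]
      · simp [Ne.symm ht, hrest t ht]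
  · set u : Fin k → ℝ := fun t => y t - (if t = j₀ then 1 else 0) with hu
    set d : ℝ := ∑ t, u t * u t with hd
    have hyj : y j₀ * y j₀ ≤ 1 := by
      rw [← hy]
      have : ∀ s ∈ Finset.univ.erase j₀, 0 ≤ y s * y s := fun s _ => mul_self_nonneg _
      rw [← Finset.add_sum_erase _ _ (Finset.mem_univ j₀)]
      nlinarith [Finset.sum_nonneg this]
    have hdval : d = 2 * (1 - y j₀) := by
      have expand : ∀ t, u t * u t
          = y t * y t - 2 * (y t * (if t = j₀ then 1 else 0))
            + (if t = j₀ then 1 else 0) := by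
        intro t
        by_cases ht : t = j₀ <;> simp [hu, ht] <;> ring
      rw [hd]
      simp only [expand]
      rw [Finset.sum_add_distrib, Finset.sum_sub_distrib, hy]
      rw [Finset.sum_ite_eq' Finset.univ j₀ (fun _ => (1:ℝ))]
      have : ∑ t, 2 * (y t * if t = j₀ then (1:ℝ) else 0) = 2 * y j₀ := by
        rw [← Finset.mul_sum]
        congr 1
        simp only [mul_ite, mul_one, mul_zero]
        rw [Finset.sum_ite_eq' Finset.univ j₀ y]
        simp
      rw [this]
      simp only [Finset.mem_univ, if_true]
      ring
    have hylt : y j₀ < 1 := lt_of_le_of_ne (by nlinarith) hc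
    have hdpos : 0 < d := by rw [hdval]; linarith
    have hdne : d ≠ 0 := ne_of_gt hdpos
    refine ⟨fun s t => (if s = t then 1 else 0) - (2/d) * u s * u t, ?_, ?_⟩
    · intro t t'
      have expand : ∀ s, ((if s = t then (1:ℝ) else 0) - (2/d) * u s * u t)
            * ((if s = t' then 1 else 0) - (2/d) * u s * u t')
          = ((if s = t then (1:ℝ) else 0) * (if s = t' then 1 else 0))
            - (2/d) * u t' * ((if s = t then (1:ℝ) else 0) * u s)
            - (2/d) * u t * ((if s = t' then (1:ℝ) else 0) * u s)
            + ((2/d) * (2/d) * (u t * u t')) * (u s * u s) := by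
        intro s; ring
      simp only [expand]
      rw [Finset.sum_add_distrib, Finset.sum_sub_distrib, Finset.sum_sub_distrib]
      rw [← Finset.mul_sum, ← Finset.mul_sum, ← Finset.mul_sum, ← hd]
      have e1 : ∑ s, ((if s = t then (1:ℝ) else 0) * (if s = t' then 1 else 0))
          = if t = t' then (1:ℝ) else 0 := by
        simp only [ite_mul, one_mul, zero_mul]
        rw [Finset.sum_ite_eq' Finset.univ t (fun s => if s = t' then (1:ℝ) else 0)]
        simp
      have e2 : ∑ s, ((if s = t then (1:ℝ) else 0) * u s) = u t := by
        simp only [ite_mul, one_mul, zero_mul]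
        rw [Finset.sum_ite_eq' Finset.univ t u]
        simp
      have e3 : ∑ s, ((if s = t' then (1:ℝ) else 0) * u s) = u t' := by
        simp only [ite_mul, one_mul, zero_mul]
        rw [Finset.sum_ite_eq' Finset.univ t' u]
        simp
      rw [e1, e2, e3]
      by_cases htt : t = t' <;>
        simp only [htt, if_pos, if_neg, ite_true, ite_false] <;> field_simp <;> ring
    · intro t
      have huj : u j₀ = y j₀ - 1 := by simp [hu]
      have h1 : (1:ℝ) - y j₀ ≠ 0 := by linarith
      show (if j₀ = t then (1:ℝ) else 0) - 2/d * u j₀ * u t = y t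
      by_cases ht : t = j₀
      · subst ht
        rw [if_pos rfl, huj, hdval]
        field_simp
        ring
      · rw [if_neg fun h => ht h.symm]
        have hut : u t = y t := by simp [hu, ht]
        rw [hut, huj, hdval]
        field_simp
        ring

lemma pad_sum {K m : ℕ} (hmK : m ≤ K) (F : ℕ → ℝ) (hF : ∀ i, m ≤ i → F i = 0) :
    ∑ i : Fin K, F i = ∑ i : Fin m, F i := by
  rw [Fin.sum_univ_eq_sum_range F K, Fin.sum_univ_eq_sum_range F m]
  exact (Finset.sum_subset (Finset.range_subset_range.2 hmK)
    (fun x _ hx => hF x (by simpa using hx))).symm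

lemma pad_sum2 {K m : ℕ} (hmK : m ≤ K) (F : ℕ → ℕ → ℝ)
    (hF : ∀ i j, m ≤ i ∨ m ≤ j → F i j = 0) :
    ∑ i : Fin K, ∑ j : Fin K, F i j = ∑ i : Fin m, ∑ j : Fin m, F i j := by
  have h1 : ∀ i : ℕ, ∑ j : Fin K, F i j = ∑ j : Fin m, F i j := fun i =>
    pad_sum hmK (F i) (fun j hj => hF i j (Or.inr hj))
  calc ∑ i : Fin K, ∑ j : Fin K, F i j
      = ∑ i : Fin K, ∑ j : Fin m, F i j := Finset.sum_congr rfl (fun i _ => h1 i)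
    _ = ∑ i : Fin m, ∑ j : Fin m, F i j := by
        refine pad_sum hmK (fun i => ∑ j : Fin m, F i j) (fun i hi => ?_)
        exact Finset.sum_eq_zero (fun j _ => hF i j (Or.inl hi))

lemma exists_rotation (x g h : ℝ) :
    ∃ c s : ℝ, c^2 + s^2 = 1 ∧ (c^2 - s^2) * x + c*s*(g - h) = 0 := by
  set f : ℝ → ℝ := fun θ =>
    (Real.cos θ^2 - Real.sin θ^2) * x + Real.cos θ * Real.sin θ * (g - h) with hf
  have hcont : Continuous f := by fun_prop
  have hf0 : f 0 = x := by simp [hf]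
  have hf1 : f (Real.pi/2) = -x := by
    simp [hf, Real.cos_pi_div_two, Real.sin_pi_div_two]
  have hpi : (0:ℝ) ≤ Real.pi / 2 := le_of_lt Real.pi_div_two_pos
  have key : ∃ θ, f θ = 0 := by
    rcases le_total 0 x with hx | hx
    · have : (0:ℝ) ∈ Set.Icc (f (Real.pi/2)) (f 0) := by
        rw [hf0, hf1]; constructor <;> linarith
      obtain ⟨θ, _, hθ⟩ := intermediate_value_Icc' hpi hcont.continuousOn this
      exact ⟨θ, hθ⟩
    · have : (0:ℝ) ∈ Set.Icc (f 0) (f (Real.pi/2)) := by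
        rw [hf0, hf1]; constructor <;> linarith
      obtain ⟨θ, _, hθ⟩ := intermediate_value_Icc hpi hcont.continuousOn this
      exact ⟨θ, hθ⟩
  obtain ⟨θ, hθ⟩ := key
  exact ⟨Real.cos θ, Real.sin θ, by rw [← Real.cos_sq_add_sin_sq θ], hθ⟩

lemma inn_comb (a b a' b' : ℝ) (U V : Matrix (Fin n) (Fin n) ℝ) :
    inn (a•U + b•V) (a'•U + b'•V)
      = a*a'*inn U U + (a*b' + b*a')*inn U V + b*b'*inn V V := by
  simp only [inn_add_left, inn_add_right, inn_smul_left, inn_smul_right, inn_comm V U]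
  ring

lemma isSymm_sum_smul {k : ℕ} (c : Fin k → ℝ) (M : Fin k → Matrix (Fin n) (Fin n) ℝ)
    (h : ∀ t, (M t).IsSymm) : (∑ t, c t • M t).IsSymm := by
  unfold Matrix.IsSymm
  rw [Matrix.transpose_sum]
  apply Finset.sum_congr rfl
  intro t _
  rw [Matrix.transpose_smul, h t]

lemma isSymm_comb (a b : ℝ) (U V : Matrix (Fin n) (Fin n) ℝ)
    (hU : U.IsSymm) (hV : V.IsSymm) : (a • U + b • V).IsSymm := by
  unfold Matrix.IsSymm at *
  rw [Matrix.transpose_add, Matrix.transpose_smul, Matrix.transpose_smul, hU, hV]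

lemma mcomm_skew (X Y : Matrix (Fin n) (Fin n) ℝ) (hX : X.IsSymm) (hY : Y.IsSymm) :
    (mcomm X Y)ᵀ = - mcomm X Y := by
  unfold Matrix.IsSymm at hX hY
  show (X*Y - Y*X)ᵀ = -(X*Y - Y*X)
  rw [Matrix.transpose_sub, Matrix.transpose_mul, Matrix.transpose_mul, hX, hY]
  abel

lemma decomp_double {k : ℕ} (j₀ : Fin k) (f : Fin k → Fin k → ℝ)
    (hsymm : ∀ r s, f r s = f s r) (hj : f j₀ j₀ = 0) :
    ∑ r, ∑ s, f r s
      = 2 * (∑ s ∈ Finset.univ.erase j₀, f j₀ s)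
        + ∑ r ∈ Finset.univ.erase j₀, ∑ s ∈ Finset.univ.erase j₀, f r s := by
  have hrow : ∀ r, ∑ s, f r s = f r j₀ + ∑ s ∈ Finset.univ.erase j₀, f r s :=
    fun r => (Finset.add_sum_erase _ _ (Finset.mem_univ j₀)).symm
  rw [← Finset.add_sum_erase Finset.univ (fun r => ∑ s, f r s) (Finset.mem_univ j₀)]
  rw [hrow j₀, hj]
  have h2 : ∑ r ∈ Finset.univ.erase j₀, ∑ s, f r s
      = (∑ r ∈ Finset.univ.erase j₀, f r j₀)
        + ∑ r ∈ Finset.univ.erase j₀, ∑ s ∈ Finset.univ.erase j₀, f r s := by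
    rw [← Finset.sum_add_distrib]
    apply Finset.sum_congr rfl
    intro r _
    exact hrow r
  rw [h2]
  have h3 : ∑ r ∈ Finset.univ.erase j₀, f r j₀ = ∑ s ∈ Finset.univ.erase j₀, f j₀ s :=
    Finset.sum_congr rfl (fun r _ => hsymm r j₀)
  rw [h3]
  ring

lemma decomp_cons {k : ℕ} (f : Fin (k+1) → Fin (k+1) → ℝ)
    (hsymm : ∀ r s, f r s = f s r) (h0 : f 0 0 = 0) :
    ∑ r, ∑ s, f r s
      = 2 * (∑ s : Fin k, f 0 s.succ) + ∑ r : Fin k, ∑ s : Fin k, f r.succ s.succ := by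
  rw [Fin.sum_univ_succ (fun r => ∑ s, f r s), Fin.sum_univ_succ (f 0)]
  have hrow : ∀ r : Fin k, ∑ s, f r.succ s
      = f r.succ 0 + ∑ s : Fin k, f r.succ s.succ := fun r => Fin.sum_univ_succ _
  simp only [hrow]
  rw [Finset.sum_add_distrib]
  have h1 : ∑ r : Fin k, f r.succ 0 = ∑ r : Fin k, f 0 r.succ :=
    Finset.sum_congr rfl (fun r _ => hsymm r.succ 0)
  rw [h0, h1]
  ring

/-- The full (untruncated) double sum of squared commutator norms. -/
noncomputable def Rfull {m : ℕ} (A : Fin m → Matrix (Fin n) (Fin n) ℝ) : ℝ :=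
  ∑ r, ∑ s, frobSq (mcomm (A r) (A s))

/-- The DDVV statement in "full double sum" form. -/
def Pfull (n m : ℕ) : Prop :=
  ∀ A : Fin m → Matrix (Fin n) (Fin n) ℝ, (∀ r, (A r).IsSymm) →
    (∑ r, frobSq (A r))^2 ≥ Rfull A

set_option maxHeartbeats 1000000 in
lemma descent {k : ℕ} (hk : n * (n-1)/2 < k) (IH : Pfull n k) : Pfull n (k+1) := by
  intro A hA
  classical
  set hd : Matrix (Fin n) (Fin n) ℝ := A 0 with hhd
  set tl : Fin k → Matrix (Fin n) (Fin n) ℝ := fun s => A s.succ with htl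
  have hdsymm : hd.IsSymm := hA 0
  have htlsymm : ∀ s, (tl s).IsSymm := fun s => hA s.succ
  -- Step 1: a unit vector in the kernel of y ↦ [hd, tl(y)]
  obtain ⟨y0, hy0, hy0ne⟩ := exists_kernel_vec hk (fun s => mcomm hd (tl s))
    (fun s => mcomm_skew _ _ hdsymm (htlsymm s))
  set c0 : ℝ := ∑ t, y0 t * y0 t with hc0
  have hc0pos : 0 < c0 := by
    have hex : ∃ t, y0 t ≠ 0 := by
      by_contra hno
      push_neg at hno
      exact hy0ne (funext hno)
    obtain ⟨t0, ht0⟩ := hex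
    have : ∀ t ∈ Finset.univ, 0 ≤ y0 t * y0 t := fun t _ => mul_self_nonneg _
    apply Finset.sum_pos' this ⟨t0, Finset.mem_univ t0, mul_self_pos.2 ht0⟩
  set r0 : ℝ := Real.sqrt c0 with hr0
  have hr0pos : 0 < r0 := Real.sqrt_pos.2 hc0pos
  have hr0sq : r0 * r0 = c0 := Real.mul_self_sqrt hc0pos.le
  set y : Fin k → ℝ := fun t => y0 t / r0 with hy
  have hynorm : ∑ t, y t * y t = 1 := by
    have : ∀ t, y t * y t = (y0 t * y0 t) * (1 / (r0*r0)) := by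
      intro t; rw [hy]; field_simp
    simp only [this]
    rw [← Finset.sum_mul, ← hc0, hr0sq]
    field_simp
  have hyker : ∑ t, y t • mcomm hd (tl t) = 0 := by
    have : ∀ t, y t • mcomm hd (tl t) = r0⁻¹ • (y0 t • mcomm hd (tl t)) := by
      intro t
      rw [hy, smul_smul]
      congr 1
      field_simp
    simp only [this]
    rw [← Finset.smul_sum, hy0, smul_zero]
  -- Step 2: Householder rotation
  have hkpos : 0 < k := by omega
  set j₀ : Fin k := ⟨0, hkpos⟩ with hj₀
  obtain ⟨O, hO, hOrow⟩ := householder j₀ y hynorm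
  set B : Fin k → Matrix (Fin n) (Fin n) ℝ := fun s => ∑ t, O s t • tl t with hB
  have hBsymm : ∀ s, (B s).IsSymm := fun s => isSymm_sum_smul _ _ htlsymm
  set G : Matrix (Fin n) (Fin n) ℝ := B j₀ with hG
  have hcomm0 : mcomm hd G = 0 := by
    rw [hG, hB]
    rw [mcomm_sum_right]
    have : ∀ t, mcomm hd (O j₀ t • tl t) = y t • mcomm hd (tl t) := by
      intro t
      rw [mcomm_smul_right, hOrow t]
    simp only [this]
    exact hyker
  -- Parseval identities
  have hBlin : ∀ (X : Matrix (Fin n) (Fin n) ℝ) s,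
      mcomm X (B s) = ∑ t, O s t • mcomm X (tl t) := by
    intro X s
    rw [hB, mcomm_sum_right]
    apply Finset.sum_congr rfl
    intro t _
    rw [mcomm_smul_right]
  have par1 : ∑ s, frobSq (B s) = ∑ t, frobSq (tl t) := by
    simp only [frobSq_eq_inn]
    exact parseval O hO tl
  have par2 : ∑ s, frobSq (mcomm hd (B s)) = ∑ t, frobSq (mcomm hd (tl t)) := by
    simp only [frobSq_eq_inn]
    have := parseval O hO (fun t => mcomm hd (tl t))
    simp only [← hBlin] at this
    exact this
  have par3 : ∑ s, ∑ s', frobSq (mcomm (B s) (B s'))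
      = ∑ t, ∑ t', frobSq (mcomm (tl t) (tl t')) := by
    have stepa : ∀ s, ∑ s', frobSq (mcomm (B s) (B s'))
        = ∑ t, frobSq (mcomm (B s) (tl t)) := by
      intro s
      simp only [frobSq_eq_inn]
      have := parseval O hO (fun t => mcomm (B s) (tl t))
      simp only [← hBlin] at this
      exact this
    have stepb : ∀ t, ∑ s, frobSq (mcomm (B s) (tl t))
        = ∑ u, frobSq (mcomm (tl u) (tl t)) := by
      intro t
      simp only [frobSq_eq_inn]
      have key : ∀ s, mcomm (B s) (tl t) = ∑ u, O s u • mcomm (tl u) (tl t) := by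
        intro s
        rw [hB, mcomm_sum_left]
        apply Finset.sum_congr rfl
        intro u _
        rw [mcomm_smul_left]
      simp only [key]
      exact parseval O hO (fun u => mcomm (tl u) (tl t))
    calc ∑ s, ∑ s', frobSq (mcomm (B s) (B s'))
        = ∑ s, ∑ t, frobSq (mcomm (B s) (tl t)) :=
          Finset.sum_congr rfl (fun s _ => stepa s)
      _ = ∑ t, ∑ s, frobSq (mcomm (B s) (tl t)) := Finset.sum_comm
      _ = ∑ t, ∑ u, frobSq (mcomm (tl u) (tl t)) :=
          Finset.sum_congr rfl (fun t _ => stepb t)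
      _ = ∑ u, ∑ t, frobSq (mcomm (tl u) (tl t)) := Finset.sum_comm
  -- Step 3: 2×2 rotation making P ⟂ Q
  set hh : ℝ := frobSq hd with hhh
  set gg : ℝ := frobSq G with hgg
  set xx : ℝ := inn hd G with hxx
  obtain ⟨c, s, hcs, hrot⟩ := exists_rotation xx gg hh
  set P : Matrix (Fin n) (Fin n) ℝ := c • hd + s • G with hP
  set Q : Matrix (Fin n) (Fin n) ℝ := (-s) • hd + c • G with hQ
  have hPQ : inn P Q = 0 := by
    rw [hP, hQ, inn_comb]
    rw [← frobSq_eq_inn, ← hhh, ← hxx]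
    have : inn G G = gg := by rw [hgg, frobSq_eq_inn]
    rw [this]
    linear_combination hrot
  have hPsymm : P.IsSymm := isSymm_comb _ _ _ _ hdsymm (hBsymm j₀)
  have hQsymm : Q.IsSymm := isSymm_comb _ _ _ _ hdsymm (hBsymm j₀)
  have hPQnorm : frobSq P + frobSq Q = hh + gg := by
    rw [hP, hQ, frobSq_eq_inn, frobSq_eq_inn, inn_comb, inn_comb]
    rw [← frobSq_eq_inn, ← hhh]
    have : inn G G = gg := by rw [hgg, frobSq_eq_inn]
    rw [this]
    linear_combination (hh + gg) * hcs
  have key2 : ∀ X : Matrix (Fin n) (Fin n) ℝ,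
      frobSq (mcomm P X) + frobSq (mcomm Q X)
        = frobSq (mcomm hd X) + frobSq (mcomm G X) := by
    intro X
    have hPX : mcomm P X = c • mcomm hd X + s • mcomm G X := by
      rw [hP, mcomm_add_left, mcomm_smul_left, mcomm_smul_left]
    have hQX : mcomm Q X = (-s) • mcomm hd X + c • mcomm G X := by
      rw [hQ, mcomm_add_left, mcomm_smul_left, mcomm_smul_left]
    rw [hPX, hQX, frobSq_eq_inn, frobSq_eq_inn, inn_comb, inn_comb,
      frobSq_eq_inn (mcomm hd X), frobSq_eq_inn (mcomm G X)]
    linear_combination (inn (mcomm hd X) (mcomm hd X) + inn (mcomm G X) (mcomm G X)) * hcs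
  have hPG : mcomm P G = 0 := by
    rw [hP, mcomm_add_left, mcomm_smul_left, mcomm_smul_left, hcomm0, mcomm_self]
    simp
  have hQG : mcomm Q G = 0 := by
    rw [hQ, mcomm_add_left, mcomm_smul_left, mcomm_smul_left, hcomm0, mcomm_self]
    simp
  -- Step 4: merge P and Q
  set kk : ℝ := ∑ t ∈ Finset.univ.erase j₀, inn (mcomm P (B t)) (mcomm Q (B t)) with hkk
  set ε : ℝ := if 0 ≤ kk then 1 else -1 with hε
  have hε2 : ε * ε = 1 := by rw [hε]; split <;> norm_num
  have hεkk : 0 ≤ ε * kk := by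
    rw [hε]; split
    · simpa
    · push_neg at *; nlinarith
  set C : Matrix (Fin n) (Fin n) ℝ := P + ε • Q with hC
  have hCsymm : C.IsSymm := by
    have := isSymm_comb 1 ε P Q hPsymm hQsymm
    simpa using this
  have hCnorm : frobSq C = frobSq P + frobSq Q := by
    have h1 : C = (1:ℝ) • P + ε • Q := by rw [hC, one_smul]
    rw [h1, frobSq_eq_inn, inn_comb, hPQ, ← frobSq_eq_inn, ← frobSq_eq_inn]
    linear_combination (frobSq Q) * hε2
  have hCG : mcomm C G = 0 := by
    rw [hC, mcomm_add_left, mcomm_smul_left, hPG, hQG]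
    simp
  have hCterm : ∀ X : Matrix (Fin n) (Fin n) ℝ,
      frobSq (mcomm C X)
        = frobSq (mcomm P X) + frobSq (mcomm Q X)
          + 2 * ε * inn (mcomm P X) (mcomm Q X) := by
    intro X
    have h1 : mcomm C X = (1:ℝ) • mcomm P X + ε • mcomm Q X := by
      rw [hC, mcomm_add_left, mcomm_smul_left, one_smul]
    rw [h1, frobSq_eq_inn, inn_comb, ← frobSq_eq_inn, ← frobSq_eq_inn]
    linear_combination (frobSq (mcomm Q X)) * hε2
  set D : Fin k → Matrix (Fin n) (Fin n) ℝ := Function.update B j₀ C with hD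
  have hDsymm : ∀ r, (D r).IsSymm := by
    intro r
    by_cases hr : r = j₀
    · subst hr; rw [hD, Function.update_self]; exact hCsymm
    · rw [hD, Function.update_of_ne hr]; exact hBsymm r
  have hDj : D j₀ = C := by rw [hD, Function.update_self]
  have hDother : ∀ r, r ≠ j₀ → D r = B r := fun r hr => by
    rw [hD, Function.update_of_ne hr]
  -- sum of frobSq identities
  have hsum1 : ∑ r, frobSq (A r) = ∑ r, frobSq (D r) := by
    rw [Fin.sum_univ_succ (fun r => frobSq (A r))]
    have e1 : ∑ r, frobSq (D r) = frobSq C + ∑ r ∈ Finset.univ.erase j₀, frobSq (B r) := by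
      rw [← Finset.add_sum_erase Finset.univ (fun r => frobSq (D r)) (Finset.mem_univ j₀)]
      rw [hDj]
      congr 1
      exact Finset.sum_congr rfl (fun r hr => by rw [hDother r (Finset.mem_erase.1 hr).1])
    have e2 : ∑ s, frobSq (B s) = frobSq G + ∑ r ∈ Finset.univ.erase j₀, frobSq (B r) :=
      (Finset.add_sum_erase Finset.univ (fun r => frobSq (B r)) (Finset.mem_univ j₀)).symm
    rw [e1, hCnorm, hPQnorm]
    have : ∑ r : Fin k, frobSq (A r.succ) = ∑ t, frobSq (tl t) := rfl
    rw [this, ← par1, e2, ← hhh]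
    ring
  -- commutator double-sum inequality
  have hptwise : ∀ t, frobSq (mcomm C (B t))
      = frobSq (mcomm hd (B t)) + frobSq (mcomm G (B t))
        + 2 * ε * inn (mcomm P (B t)) (mcomm Q (B t)) := by
    intro t
    rw [hCterm, key2]
  have hCsum : ∑ t ∈ Finset.univ.erase j₀, frobSq (mcomm C (B t))
      = (∑ t ∈ Finset.univ.erase j₀,
          (frobSq (mcomm hd (B t)) + frobSq (mcomm G (B t)))) + 2 * ε * kk := by
    rw [hkk, Finset.mul_sum, ← Finset.sum_add_distrib]
    apply Finset.sum_congr rfl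
    intro t _
    rw [hptwise t]
  have fsymm : ∀ (E : Fin k → Matrix (Fin n) (Fin n) ℝ) (r s : Fin k),
      frobSq (mcomm (E r) (E s)) = frobSq (mcomm (E s) (E r)) :=
    fun E r s => frobSq_mcomm_symm _ _
  have hRD : (∑ r, ∑ s, frobSq (mcomm (D r) (D s)))
      = 2 * (∑ t ∈ Finset.univ.erase j₀, frobSq (mcomm C (B t)))
      + ∑ r ∈ Finset.univ.erase j₀, ∑ t ∈ Finset.univ.erase j₀,
          frobSq (mcomm (B r) (B t)) := by
    rw [decomp_double j₀ (fun r s => frobSq (mcomm (D r) (D s))) (fsymm D)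
      (show frobSq (mcomm (D j₀) (D j₀)) = 0 by rw [hDj, mcomm_self, frobSq_zero])]
    congr 1
    · congr 1
      apply Finset.sum_congr rfl
      intro t ht
      rw [hDj, hDother t (Finset.mem_erase.1 ht).1]
    · apply Finset.sum_congr rfl
      intro r hr
      apply Finset.sum_congr rfl
      intro t ht
      rw [hDother r (Finset.mem_erase.1 hr).1, hDother t (Finset.mem_erase.1 ht).1]
  have hRB : (∑ r, ∑ s, frobSq (mcomm (B r) (B s)))
      = 2 * (∑ t ∈ Finset.univ.erase j₀, frobSq (mcomm G (B t)))
      + ∑ r ∈ Finset.univ.erase j₀, ∑ t ∈ Finset.univ.erase j₀,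
          frobSq (mcomm (B r) (B t)) := by
    rw [decomp_double j₀ (fun r s => frobSq (mcomm (B r) (B s))) (fsymm B)
      (show frobSq (mcomm (B j₀) (B j₀)) = 0 by rw [mcomm_self, frobSq_zero])]
  have hRA : (∑ r, ∑ s, frobSq (mcomm (A r) (A s)))
      = 2 * (∑ t ∈ Finset.univ.erase j₀,
          (frobSq (mcomm hd (B t)) + frobSq (mcomm G (B t))))
      + ∑ r ∈ Finset.univ.erase j₀, ∑ t ∈ Finset.univ.erase j₀,
          frobSq (mcomm (B r) (B t)) := by
    have fA : ∀ r s : Fin (k+1), frobSq (mcomm (A r) (A s)) = frobSq (mcomm (A s) (A r)) :=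
      fun r s => frobSq_mcomm_symm _ _
    rw [decomp_cons (fun r s => frobSq (mcomm (A r) (A s))) fA
      (show frobSq (mcomm (A 0) (A 0)) = 0 by rw [mcomm_self, frobSq_zero])]
    have e1 : ∑ s : Fin k, frobSq (mcomm (A 0) (A s.succ))
        = ∑ s, frobSq (mcomm hd (tl s)) := rfl
    have e2 : (∑ r : Fin k, ∑ s : Fin k, frobSq (mcomm (A r.succ) (A s.succ)))
        = ∑ r, ∑ s, frobSq (mcomm (tl r) (tl s)) := rfl
    rw [e1, e2, ← par3, ← par2]
    have e3 : ∑ s, frobSq (mcomm hd (B s))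
        = ∑ t ∈ Finset.univ.erase j₀, frobSq (mcomm hd (B t)) := by
      rw [← Finset.add_sum_erase Finset.univ (fun s => frobSq (mcomm hd (B s)))
        (Finset.mem_univ j₀)]
      rw [← hG, hcomm0, frobSq_zero, zero_add]
    rw [e3, hRB, Finset.sum_add_distrib]
    ring
  have hsum2 : (∑ r, ∑ s, frobSq (mcomm (D r) (D s)))
      ≥ ∑ r, ∑ s, frobSq (mcomm (A r) (A s)) := by
    rw [hRD, hRA, hCsum]
    have h4 : 0 ≤ 4 * (ε * kk) := by linarith
    nlinarith [hεkk]
  -- conclude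
  have hIH := IH D hDsymm
  rw [Rfull] at hIH ⊢
  calc (∑ r, frobSq (A r))^2 = (∑ r, frobSq (D r))^2 := by rw [hsum1]
    _ ≥ ∑ r, ∑ s, frobSq (mcomm (D r) (D s)) := hIH
    _ ≥ ∑ r, ∑ s, frobSq (mcomm (A r) (A s)) := hsum2

lemma pad {K m : ℕ} (hm : m ≤ K) (h : Pfull n K) : Pfull n m := by
  intro A hA
  classical
  set A' : Fin K → Matrix (Fin n) (Fin n) ℝ :=
    fun i => if h : (i:ℕ) < m then A ⟨i, h⟩ else 0 with hA'
  have hA'symm : ∀ r, (A' r).IsSymm := by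
    intro r
    rw [hA']
    dsimp only
    split
    · exact hA _
    · unfold Matrix.IsSymm
      exact Matrix.transpose_zero
  have h1 : ∑ i : Fin K, frobSq (A' i) = ∑ i : Fin m, frobSq (A i) := by
    have e1 : ∀ i : Fin K, frobSq (A' i)
        = (fun i : ℕ => if h : i < m then frobSq (A ⟨i, h⟩) else 0) i.val := by
      intro i
      by_cases hi : (i:ℕ) < m <;> simp [hA', hi, frobSq_zero]
    have e2 : ∀ i : Fin m, frobSq (A i)
        = (fun i : ℕ => if h : i < m then frobSq (A ⟨i, h⟩) else 0) i.val := by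
      intro i
      simp [i.isLt]
    simp only [e1]
    rw [pad_sum hm (fun i : ℕ => if h : i < m then frobSq (A ⟨i, h⟩) else 0)
      (fun i hi => dif_neg (by omega))]
    apply Finset.sum_congr rfl
    intro i _
    exact (e2 i).symm
  have h2 : (∑ r : Fin K, ∑ s : Fin K, frobSq (mcomm (A' r) (A' s)))
      = ∑ r : Fin m, ∑ s : Fin m, frobSq (mcomm (A r) (A s)) := by
    set F : ℕ → ℕ → ℝ := fun i j =>
      if hi : i < m then (if hj : j < m then frobSq (mcomm (A ⟨i, hi⟩) (A ⟨j, hj⟩)) else 0)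
      else 0 with hF
    have e1 : ∀ r s : Fin K, frobSq (mcomm (A' r) (A' s)) = F r.val s.val := by
      intro r s
      by_cases hr : (r:ℕ) < m <;> by_cases hs : (s:ℕ) < m <;>
        simp [hA', hF, hr, hs, mcomm_zero_left, mcomm_zero_right, frobSq_zero]
    have e2 : ∀ r s : Fin m, frobSq (mcomm (A r) (A s)) = F r.val s.val := by
      intro r s
      simp [hF, r.isLt, s.isLt]
    simp only [e1]
    rw [pad_sum2 hm F (fun i j hij => by
      rcases hij with hi | hj
      · exact dif_neg (by omega)
      · by_cases hi2 : i < m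
        · have hFij : F i j
              = if hi : i < m then
                  (if hj : j < m then frobSq (mcomm (A ⟨i, hi⟩) (A ⟨j, hj⟩)) else 0)
                else 0 := rfl
          rw [hFij, dif_pos hi2]
          exact dif_neg (by omega)
        · exact dif_neg hi2)]
    apply Finset.sum_congr rfl
    intro r _
    apply Finset.sum_congr rfl
    intro s _
    exact (e2 r s).symm
  have := h A' hA'symm
  rw [Rfull] at this ⊢
  rw [h1, h2] at this
  exact this

end DDVVaux

open DDVVaux in
/-- If `P(n, n(n-1)/2 + 1)` holds, then `P(n, m)` holds for every `m ≥ 1`. -/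
theorem ddvv_reduction_to_N (n : ℕ) (hn : 2 ≤ n)
    (hP : ∀ A : Fin (n * (n - 1) / 2 + 1) → Matrix (Fin n) (Fin n) ℝ,
      (∀ r, (A r).IsSymm) →
      (∑ r, frobSq (A r)) ^ 2 ≥
        2 * ∑ r, ∑ s, (if r < s then frobSq (mcomm (A r) (A s)) else 0)) :
    ∀ m : ℕ, 1 ≤ m → ∀ A : Fin m → Matrix (Fin n) (Fin n) ℝ, (∀ r, (A r).IsSymm) →
      (∑ r, frobSq (A r)) ^ 2 ≥
        2 * ∑ r, ∑ s, (if r < s then frobSq (mcomm (A r) (A s)) else 0) := by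
  have base : Pfull n (n * (n-1) / 2 + 1) := by
    intro A hA
    have h := hP A hA
    rw [Rfull, double_sum_eq (fun r s => frobSq (mcomm (A r) (A s)))
      (fun r s => frobSq_mcomm_symm _ _) (fun r => show frobSq (mcomm (A r) (A r)) = 0 by rw [mcomm_self, frobSq_zero])]
    exact h
  have steps : ∀ j : ℕ, Pfull n (n * (n-1) / 2 + 1 + j) := by
    intro j
    induction j with
    | zero => exact base
    | succ j ih =>
        exact descent (show n * (n-1)/2 < n * (n-1)/2 + 1 + j by omega) ih
  intro m _ A hA
  have hfull : Pfull n m := by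
    rcases le_or_gt m (n * (n-1) / 2 + 1) with hle | hgt
    · exact pad hle base
    · obtain ⟨j, rfl⟩ : ∃ j, m = n * (n-1) / 2 + 1 + j :=
        ⟨m - (n * (n-1) / 2 + 1), by omega⟩
      exact steps j
  have h := hfull A hA
  rw [Rfull, double_sum_eq (fun r s => frobSq (mcomm (A r) (A s)))
    (fun r s => frobSq_mcomm_symm _ _) (fun r => show frobSq (mcomm (A r) (A r)) = 0 by rw [mcomm_self, frobSq_zero])] at h
  exact h
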